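/- Suppose Y ~ N_n(β*, I_n) (saturated model), π is a differentiable positive prior on ℝ^n, w: ℝ^n → [0,∞] is differentiable and convex, and w̄(z) = w(z) + ½‖z‖². Any critical point β̂* of the approximate selective MAP objective ½‖y - β*‖² - h(β*) - log π(β*), where h(μ) = inf_z{½‖μ-z‖² + w(z)}, satisfies β̂* = ∇w̄(y + ∇log π(β̂*)). In particular, with the constant prior π ∝ 1, the approximate selective MLE is β̂* = y + ∇w(y). -/

import Mathlib

open InnerProductSpace Set Asymptotics RealInnerProductSpace

section aux
variable {E : Type*} [NormedAddCommGroup E] [InnerProductSpace ℝ E] [CompleteSpace E]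

lemma hasGradientAt_half_sq (x : E) :
    HasGradientAt (fun z : E => (1/2 : ℝ) * ‖z‖^2) x x := by
  rw [hasGradientAt_iff_hasFDerivAt]
  have h := ((hasFDerivAt_id x).inner ℝ (hasFDerivAt_id x)).const_mul (1/2 : ℝ)
  have heq : (fun z : E => (1/2 : ℝ) * ‖z‖^2) = fun z : E => (1/2 : ℝ) * ⟪z, z⟫_ℝ := by
    funext z; rw [real_inner_self_eq_norm_sq]
  rw [heq]
  refine h.congr_fderiv ?_
  ext v
  simp [fderivInnerCLM_apply, real_inner_comm, toDual_apply_apply]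
  ring

lemma hasGradientAt_half_sq_sub (y b : E) :
    HasGradientAt (fun β : E => (1/2 : ℝ) * ‖y - β‖^2) (b - y) b := by
  rw [hasGradientAt_iff_hasFDerivAt]
  have h1 : HasFDerivAt (fun β : E => y - β) (-(ContinuousLinearMap.id ℝ E)) b := by
    simpa using (hasFDerivAt_id b).const_sub y
  have h2 := ((hasGradientAt_half_sq (y - b)).hasFDerivAt).comp b h1
  refine h2.congr_fderiv ?_
  ext v
  simp [toDual_apply_apply, inner_sub_left, inner_neg_right]

lemma convex_subgradient {w : E → ℝ} (hwc : ConvexOn ℝ univ w) {z₀ gw : E}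
    (hg : HasGradientAt w gw z₀) (z : E) : w z₀ + ⟪gw, z - z₀⟫_ℝ ≤ w z := by
  set φ : ℝ → ℝ := w ∘ (AffineMap.lineMap z₀ z : ℝ →ᵃ[ℝ] E) with hφ
  have hφc : ConvexOn ℝ univ φ := by
    have := hwc.comp_affineMap (AffineMap.lineMap z₀ z : ℝ →ᵃ[ℝ] E)
    simpa using this
  have hline : HasDerivAt (fun t : ℝ => ((AffineMap.lineMap z₀ z : ℝ →ᵃ[ℝ] E) t)) (z - z₀) 0 := by
    simp only [AffineMap.lineMap_apply, vsub_eq_sub, vadd_eq_add]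
    simpa using ((hasDerivAt_id (0:ℝ)).smul_const (z - z₀)).add_const z₀
  have hφd : HasDerivAt φ ⟪gw, z - z₀⟫_ℝ 0 := by
    have h0 : (AffineMap.lineMap z₀ z : ℝ →ᵃ[ℝ] E) 0 = z₀ := by simp
    have hg' : HasFDerivAt w ((toDual ℝ E) gw) ((AffineMap.lineMap z₀ z : ℝ →ᵃ[ℝ] E) 0) := by
      rw [h0]; exact hg.hasFDerivAt
    have := hg'.comp_hasDerivAt 0 hline
    simpa [toDual_apply_apply] using this
  have hs := hφc.le_slope_of_hasDerivAt (mem_univ (0:ℝ)) (mem_univ (1:ℝ)) one_pos hφd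
  have h0 : φ 0 = w z₀ := by simp [hφ]
  have h1 : φ 1 = w z := by simp [hφ]
  rw [slope_def_field] at hs
  simp [h0, h1] at hs
  linarith [hs]

end aux

set_option maxHeartbeats 1000000 in

/-- Estimating equation for the approximate selective MAP in the saturated model:
a critical point `β̂` of `β ↦ ½‖y-β‖² - h(β) - log π(β)` (with
`h(μ) = inf_z (½‖μ-z‖² + w z)`, `w̄(z) = w z + ½‖z‖²` strictly convex and differentiable)
satisfies `β̂ = ∇w̄(y + ∇ log π(β̂))`; with the constant prior `π ≡ 1` the approximate
selective MLE is `β̂ = y + ∇w(y)`. -/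
theorem stmt5 {n : ℕ} (y : EuclideanSpace ℝ (Fin n))
    (π : EuclideanSpace ℝ (Fin n) → ℝ) (hπ : ∀ b, 0 < π b)
    (hπd : Differentiable ℝ (fun b => Real.log (π b)))
    (w : EuclideanSpace ℝ (Fin n) → ℝ) (hw0 : ∀ z, 0 ≤ w z)
    (hwd : Differentiable ℝ w) (hwc : ConvexOn ℝ Set.univ w)
    (hsc : StrictConvexOn ℝ Set.univ (fun z => w z + (1 / 2) * ‖z‖ ^ 2))
    (βh : EuclideanSpace ℝ (Fin n))
    (hcrit : gradient (fun β => (1 / 2) * ‖y - β‖ ^ 2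
        - (⨅ z, ((1 / 2) * ‖β - z‖ ^ 2 + w z)) - Real.log (π β)) βh = 0) :
    βh = gradient (fun z => w z + (1 / 2) * ‖z‖ ^ 2)
          (y + gradient (fun b => Real.log (π b)) βh)
      ∧ ((∀ b, π b = 1) → βh = y + gradient w y) := by
  classical
  set φ : EuclideanSpace ℝ (Fin n) → ℝ := fun z => (1/2 : ℝ) * ‖βh - z‖^2 + w z with hφdef
  have hφcont : Continuous φ :=
    (continuous_const.mul (((continuous_const.sub continuous_id).norm).pow 2)).add hwd.continuous
  have hRnn : (0:ℝ) ≤ 2 * w βh := by have := hw0 βh; linarith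
  obtain ⟨z₀, hz₀K, hz₀min⟩ := (isCompact_closedBall βh (Real.sqrt (2 * w βh))).exists_isMinOn
    ⟨βh, Metric.mem_closedBall_self (Real.sqrt_nonneg _)⟩ hφcont.continuousOn
  have hφβh : φ βh = w βh := by simp [hφdef]
  have hz₀glob : ∀ z, φ z₀ ≤ φ z := by
    intro z
    by_cases hz : z ∈ Metric.closedBall βh (Real.sqrt (2 * w βh))
    · exact hz₀min hz
    · have h1 : Real.sqrt (2 * w βh) < ‖z - βh‖ := by
        simpa [Metric.mem_closedBall, dist_eq_norm, not_le] using hz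
      have h2 : 2 * w βh < ‖z - βh‖^2 := by
        have hs := Real.sq_sqrt hRnn
        nlinarith [Real.sqrt_nonneg (2 * w βh), norm_nonneg (z - βh)]
      have h3 : φ βh ≤ φ z := by
        rw [hφβh]
        have hnv : φ z = (1/2 : ℝ) * ‖z - βh‖^2 + w z := by
          rw [hφdef]; simp only []; rw [norm_sub_rev]
        rw [hnv]
        have := hw0 z
        linarith
      exact le_trans (hz₀min (Metric.mem_closedBall_self (Real.sqrt_nonneg _))) h3
  -- gradient of φ at z₀ vanishes
  have hφgrad : HasGradientAt φ ((z₀ - βh) + gradient w z₀) z₀ := by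
    rw [hasGradientAt_iff_hasFDerivAt, map_add]
    exact (hasGradientAt_half_sq_sub βh z₀).hasFDerivAt.add (hwd z₀).hasGradientAt.hasFDerivAt
  have hlocmin : IsLocalMin φ z₀ :=
    (isMinOn_iff.mpr (fun x _ => hz₀glob x)).isLocalMin Filter.univ_mem
  have hgrad0 : (z₀ - βh) + gradient w z₀ = 0 := by
    have h1 : gradient φ z₀ = (z₀ - βh) + gradient w z₀ := hφgrad.gradient
    have h2 : gradient φ z₀ = 0 := by
      rw [gradient, hlocmin.fderiv_eq_zero, map_zero]
    rw [h2] at h1; exact h1.symm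
  have hgwv : gradient w z₀ = βh - z₀ := by
    have h := eq_neg_of_add_eq_zero_right hgrad0
    rw [h, neg_sub]
  have hwg0 : HasGradientAt w (βh - z₀) z₀ := by
    rw [← hgwv]; exact (hwd z₀).hasGradientAt
  have hsub : ∀ z, w z₀ + ⟪βh - z₀, z - z₀⟫_ℝ ≤ w z := fun z =>
    convex_subgradient hwc hwg0 z
  -- the infimum function
  have hbdd : ∀ β : EuclideanSpace ℝ (Fin n),
      BddBelow (Set.range fun z => (1/2 : ℝ) * ‖β - z‖^2 + w z) := by
    intro β
    refine ⟨0, ?_⟩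
    rintro x ⟨z, rfl⟩
    have h1 := hw0 z
    have h2 : (0:ℝ) ≤ ‖β - z‖^2 := sq_nonneg _
    linarith
  set F : EuclideanSpace ℝ (Fin n) → ℝ :=
    fun β => ⨅ z, ((1/2 : ℝ) * ‖β - z‖^2 + w z) with hF
  have hFβh : F βh = φ z₀ :=
    le_antisymm (ciInf_le (hbdd βh) z₀) (le_ciInf (fun z => hz₀glob z))
  have hφz₀ : φ z₀ = (1/2 : ℝ) * ‖βh - z₀‖^2 + w z₀ := by rw [hφdef]
  have hup : ∀ β, F β ≤ F βh + ⟪βh - z₀, β - βh⟫_ℝ + (1/2 : ℝ) * ‖β - βh‖^2 := by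
    intro β
    refine le_trans (ciInf_le (hbdd β) z₀) ?_
    have hsplit : β - z₀ = (β - βh) + (βh - z₀) := by abel
    rw [hsplit, norm_add_sq_real, hFβh, hφz₀, real_inner_comm]
    ring_nf
    nlinarith [norm_nonneg (β - βh)]
  have hlo : ∀ β, F βh + ⟪βh - z₀, β - βh⟫_ℝ ≤ F β := by
    intro β
    refine le_ciInf (fun z => ?_)
    have h1 := hsub z
    have hsplit : (z - β) + (β - βh) + (βh - z₀) = z - z₀ := by abel
    have h2 : ⟪βh - z₀, z - z₀⟫_ℝ
        = ⟪βh - z₀, z - β⟫_ℝ + ⟪βh - z₀, β - βh⟫_ℝ + ‖βh - z₀‖^2 := by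
      rw [← hsplit, inner_add_right, inner_add_right, real_inner_self_eq_norm_sq]
    have h3 : ‖(z - β) + (βh - z₀)‖^2
        = ‖z - β‖^2 + 2 * ⟪z - β, βh - z₀⟫_ℝ + ‖βh - z₀‖^2 := norm_add_sq_real _ _
    have h4 : ‖β - z‖ = ‖z - β‖ := norm_sub_rev _ _
    rw [hFβh, hφz₀, h4]
    nlinarith [sq_nonneg ‖(z - β) + (βh - z₀)‖, real_inner_comm (βh - z₀) (z - β)]
  have hFgrad : HasGradientAt F (βh - z₀) βh := by
    rw [hasGradientAt_iff_isLittleO, Asymptotics.isLittleO_iff]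
    intro c hc
    filter_upwards [Metric.ball_mem_nhds βh (by positivity : (0:ℝ) < 2*c)] with x hx
    have hd : ‖x - βh‖ < 2 * c := by
      rw [← dist_eq_norm]; simpa [Metric.mem_ball] using hx
    have h1 := hlo x
    have h2 := hup x
    rw [Real.norm_eq_abs, abs_le]
    constructor
    · nlinarith [norm_nonneg (x - βh)]
    · nlinarith [norm_nonneg (x - βh)]
  -- total gradient
  have hLgrad : HasGradientAt (fun b => Real.log (π b))
      (gradient (fun b => Real.log (π b)) βh) βh := (hπd βh).hasGradientAt
  have hAgrad : HasGradientAt (fun β : EuclideanSpace ℝ (Fin n) => (1/2 : ℝ) * ‖y - β‖^2)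
      (βh - y) βh := hasGradientAt_half_sq_sub y βh
  have htot : HasGradientAt (fun β : EuclideanSpace ℝ (Fin n) => (1/2 : ℝ) * ‖y - β‖^2
      - (⨅ z, ((1/2 : ℝ) * ‖β - z‖^2 + w z)) - Real.log (π β))
      ((βh - y) - (βh - z₀) - gradient (fun b => Real.log (π b)) βh) βh := by
    rw [hasGradientAt_iff_hasFDerivAt, map_sub, map_sub]
    exact (hAgrad.hasFDerivAt.sub hFgrad.hasFDerivAt).sub hLgrad.hasFDerivAt
  have hz₀eq : z₀ = y + gradient (fun b => Real.log (π b)) βh := by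
    have h1 : (βh - y) - (βh - z₀) - gradient (fun b => Real.log (π b)) βh = 0 := by
      have h := htot.gradient
      rw [hcrit] at h; exact h.symm
    have h2 : z₀ - (y + gradient (fun b => Real.log (π b)) βh)
        = (βh - y) - (βh - z₀) - gradient (fun b => Real.log (π b)) βh := by abel
    have h3 : z₀ - (y + gradient (fun b => Real.log (π b)) βh) = 0 := by rw [h2, h1]
    exact sub_eq_zero.mp h3
  -- part 1
  have hpart1 : βh = gradient (fun z => w z + (1 / 2) * ‖z‖ ^ 2)
      (y + gradient (fun b => Real.log (π b)) βh) := by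
    rw [← hz₀eq]
    have hg' : HasGradientAt (fun z : EuclideanSpace ℝ (Fin n) => w z + (1/2 : ℝ) * ‖z‖^2)
        ((βh - z₀) + z₀) z₀ := by
      rw [hasGradientAt_iff_hasFDerivAt, map_add]
      exact hwg0.hasFDerivAt.add (hasGradientAt_half_sq z₀).hasFDerivAt
    rw [hg'.gradient]
    abel
  refine ⟨hpart1, ?_⟩
  -- part 2
  intro hconst
  have hL0 : (fun b : EuclideanSpace ℝ (Fin n) => Real.log (π b)) = fun _ => (0:ℝ) := by
    funext b; rw [hconst b, Real.log_one]
  have hgL0 : gradient (fun b : EuclideanSpace ℝ (Fin n) => Real.log (π b)) βh = 0 := by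
    rw [hL0]; exact gradient_const βh (0:ℝ)
  have hz₀y : z₀ = y := by rw [hz₀eq, hgL0, add_zero]
  have hgwy : gradient w y = βh - y := by rw [← hz₀y]; exact hgwv
  rw [hgwy]
  abel
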